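/- arXiv:2605.06156 — 5 statements merged into one kernel-verified Lean document; each statement's English description precedes it below -/
import Mathlib

section
/- Let ρ be a probability measure on a measurable space and let h be a bounded measurable real-valued function. Define Z = ∫ e^h dρ (which satisfies 0 < Z < ∞) and let π_h be the probability measure with density e^h / Z with respect to ρ. Then for every probability measure π absolutely continuous with respect to ρ with KL(π‖ρ) < ∞, one has ∫ h dπ − KL(π ‖ ρ) ≤ log Z, with equality if and only if π = π_h. In particular π_h is the unique maximizer of the functional π ↦ ∫ h dπ − KL(π‖ρ) over such π. -/
open MeasureTheory ProbabilityTheory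

section Aux

variable {Ω : Type*} [MeasurableSpace Ω] {μ ν : Measure Ω}

/-- Pointwise a.e. lower bound: `1 - dν/dμ ≤ llr μ ν`. -/
lemma aux_llr_lower (hμν : μ ≪ ν) [SigmaFinite μ] [SigmaFinite ν] :
    ∀ᵐ x ∂μ, 1 - (ν.rnDeriv μ x).toReal ≤ llr μ ν x := by
  filter_upwards [exp_neg_llr hμν] with x hx
  have hexp := Real.add_one_le_exp (-llr μ ν x)
  rw [hx] at hexp
  linarith

lemma aux_integral_llr_nonneg [IsProbabilityMeasure μ] [IsProbabilityMeasure ν]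
    (hμν : μ ≪ ν) (hint : Integrable (llr μ ν) μ) :
    0 ≤ ∫ x, llr μ ν x ∂μ := by
  have hg : Integrable (fun x ↦ (ν.rnDeriv μ x).toReal) μ :=
    Measure.integrable_toReal_rnDeriv
  have hgle : ∫ x, (ν.rnDeriv μ x).toReal ∂μ ≤ 1 := by
    rw [Measure.integral_toReal_rnDeriv']
    simp only [probReal_univ, measureReal_def, measure_univ, ENNReal.toReal_one]
    have : (0:ℝ) ≤ ((ν.singularPart μ) Set.univ).toReal := ENNReal.toReal_nonneg
    linarith
  calc (0:ℝ) ≤ ∫ x, (1 - (ν.rnDeriv μ x).toReal) ∂μ := by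
        rw [integral_sub (integrable_const 1) hg]
        simp only [integral_const, measure_univ, probReal_univ, ENNReal.toReal_one, smul_eq_mul, one_mul]
        linarith
    _ ≤ ∫ x, llr μ ν x ∂μ :=
        integral_mono_ae ((integrable_const 1).sub hg) hint (aux_llr_lower hμν)

/-- If `llr μ ν = 0` a.e. `μ`, then `μ = ν` (for probability measures, `μ ≪ ν`). -/
lemma aux_eq_of_llr_ae_zero [IsProbabilityMeasure μ] [IsProbabilityMeasure ν]
    (hμν : μ ≪ ν) (h0 : llr μ ν =ᵐ[μ] 0) : μ = ν := by
  -- first: μ.rnDeriv ν = 1 μ-a.e.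
  have h1 : μ.rnDeriv ν =ᵐ[μ] 1 := by
    filter_upwards [h0, Measure.rnDeriv_pos hμν, hμν.ae_le (Measure.rnDeriv_lt_top μ ν)]
      with x hx hpos hlt
    have htR : (μ.rnDeriv ν x).toReal = 1 := by
      have hlog : Real.log (μ.rnDeriv ν x).toReal = 0 := hx
      have hpos' : 0 < (μ.rnDeriv ν x).toReal := ENNReal.toReal_pos hpos.ne' hlt.ne
      have hexp := Real.exp_log hpos'
      rw [hlog, Real.exp_zero] at hexp
      exact hexp.symm
    have := (ENNReal.toReal_eq_one_iff _).mp htR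
    simpa using this
  -- upgrade to ν-a.e. using that both are probability measures
  set A : Set Ω := {x | μ.rnDeriv ν x = 1} with hA
  have hAmeas : MeasurableSet A := (μ.measurable_rnDeriv ν) (measurableSet_singleton 1)
  have hμAc : μ Aᶜ = 0 := by
    rw [Filter.EventuallyEq, ae_iff] at h1
    refine measure_mono_null ?_ h1
    intro x hx
    simpa [hA] using hx
  have hint0 : ∫⁻ x in Aᶜ, μ.rnDeriv ν x ∂ν = 0 := by
    rw [← withDensity_apply _ hAmeas.compl, Measure.withDensity_rnDeriv_eq μ ν hμν, hμAc]
  have hμA : μ A = ν A := by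
    rw [← Measure.withDensity_rnDeriv_eq μ ν hμν, withDensity_apply _ hAmeas]
    have hcongr : ∫⁻ x in A, μ.rnDeriv ν x ∂ν = ∫⁻ x in A, 1 ∂ν :=
      setLIntegral_congr_fun hAmeas (fun x hx ↦ hx)
    rw [hcongr, setLIntegral_one]
  have hνAc : ν Aᶜ = 0 := by
    have hμA1 : μ A = 1 := by
      have hsum := measure_add_measure_compl (μ := μ) hAmeas
      rw [hμAc, add_zero, measure_univ] at hsum
      exact hsum
    have hνA1 : ν A = 1 := by rw [← hμA, hμA1]
    have hsum := measure_add_measure_compl (μ := ν) hAmeas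
    rw [hνA1, measure_univ] at hsum
    have : (1:ENNReal) + ν Aᶜ = 1 + 0 := by rw [add_zero, hsum]
    exact (ENNReal.add_right_inj (by simp)).mp this
  have hν1 : μ.rnDeriv ν =ᵐ[ν] 1 := by
    rw [Filter.EventuallyEq, ae_iff]
    refine measure_mono_null ?_ hνAc
    intro x hx
    simpa [hA, Set.mem_setOf_eq] using hx
  exact (Measure.rnDeriv_eq_one_iff_eq hμν).mp hν1

lemma aux_llr_ae_zero_of_integral_eq_zero [IsProbabilityMeasure μ] [IsProbabilityMeasure ν]
    (hμν : μ ≪ ν) (hint : Integrable (llr μ ν) μ)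
    (hzero : ∫ x, llr μ ν x ∂μ = 0) : llr μ ν =ᵐ[μ] 0 := by
  have hg : Integrable (fun x ↦ (ν.rnDeriv μ x).toReal) μ :=
    Measure.integrable_toReal_rnDeriv
  set φ : Ω → ℝ := fun x ↦ llr μ ν x - (1 - (ν.rnDeriv μ x).toReal) with hφ
  have h1g : Integrable (fun x ↦ 1 - (ν.rnDeriv μ x).toReal) μ := (integrable_const 1).sub hg
  have hφint : Integrable φ μ := hint.sub h1g
  have hφnonneg : 0 ≤ᵐ[μ] φ := by
    filter_upwards [aux_llr_lower hμν] with x hx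
    simp only [hφ, Pi.zero_apply]; linarith
  have hφle : ∫ x, φ x ∂μ ≤ 0 := by
    have : ∫ x, φ x ∂μ = ∫ x, llr μ ν x ∂μ - (1 - ∫ x, (ν.rnDeriv μ x).toReal ∂μ) := by
      rw [integral_sub hint h1g, integral_sub (integrable_const 1) hg]
      simp
    rw [this, hzero]
    have : ∫ x, (ν.rnDeriv μ x).toReal ∂μ ≤ 1 := by
      rw [Measure.integral_toReal_rnDeriv']
      simp only [probReal_univ, measureReal_def, measure_univ, ENNReal.toReal_one]
      have : (0:ℝ) ≤ ((ν.singularPart μ) Set.univ).toReal := ENNReal.toReal_nonneg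
      linarith
    linarith
  have hφge : 0 ≤ ∫ x, φ x ∂μ := integral_nonneg_of_ae hφnonneg
  have hφzero : ∫ x, φ x ∂μ = 0 := le_antisymm hφle hφge
  have hφae : φ =ᵐ[μ] 0 :=
    (integral_eq_zero_iff_of_nonneg_ae hφnonneg hφint).mp hφzero
  -- now equality in `x + 1 ≤ exp x` forces `llr = 0`
  filter_upwards [hφae, exp_neg_llr hμν] with x hx hxexp
  simp only [hφ, Pi.zero_apply] at hx ⊢
  by_contra hne
  have hne' : -llr μ ν x ≠ 0 := fun h0' ↦ hne (neg_eq_zero.mp h0')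
  have := Real.add_one_lt_exp hne'
  rw [hxexp] at this
  linarith

end Aux

/-- **Gibbs variational principle.**
Let `ρ` be a probability measure and `h` a bounded measurable function. With
`Z = ∫ e^h dρ` (which is positive) and `π_h` the probability measure with density
`e^h/Z` w.r.t. `ρ`, for every probability measure `π ≪ ρ` with finite KL divergence
(encoded as integrability of the log-likelihood ratio `llr π ρ`, so that
`KL(π‖ρ) = ∫ llr π ρ dπ`), one has `∫ h dπ − KL(π‖ρ) ≤ log Z` with equality iff
`π = π_h`; in particular `π_h` is the unique maximizer. -/
theorem gibbs_variational_principle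
    {Ω : Type*} [MeasurableSpace Ω] (ρ : Measure Ω) [IsProbabilityMeasure ρ]
    (h : Ω → ℝ) (hmeas : Measurable h) (M : ℝ) (hbd : ∀ x, |h x| ≤ M)
    (Z : ℝ) (hZdef : Z = ∫ x, Real.exp (h x) ∂ρ)
    (πh : Measure Ω)
    (hπh : πh = ρ.withDensity (fun x => ENNReal.ofReal (Real.exp (h x) / Z))) :
    0 < Z ∧
    ∀ π : Measure Ω, IsProbabilityMeasure π → π ≪ ρ → Integrable (llr π ρ) π →
      ((∫ x, h x ∂π) - (∫ x, llr π ρ x ∂π) ≤ Real.log Z ∧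
       ((∫ x, h x ∂π) - (∫ x, llr π ρ x ∂π) = Real.log Z ↔ π = πh)) := by
  -- integrability of `exp ∘ h` w.r.t. `ρ`
  have hexp_int : Integrable (fun x ↦ Real.exp (h x)) ρ := by
    refine Integrable.mono' (integrable_const (Real.exp M))
      (hmeas.exp).aestronglyMeasurable ?_
    refine Filter.Eventually.of_forall fun x ↦ ?_
    rw [Real.norm_eq_abs, abs_of_pos (Real.exp_pos _)]
    exact Real.exp_le_exp.mpr ((abs_le.mp (hbd x)).2)
  have hZpos : 0 < Z := hZdef ▸ integral_exp_pos hexp_int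
  have hπh_tilted : πh = ρ.tilted h := by
    rw [hπh, Measure.tilted, hZdef]
  refine ⟨hZpos, fun π hπprob hπρ hllr ↦ ?_⟩
  haveI := hπprob
  haveI : IsProbabilityMeasure (ρ.tilted h) := isProbabilityMeasure_tilted hexp_int
  have hπtilted : π ≪ ρ.tilted h := hπρ.trans (absolutelyContinuous_tilted hexp_int)
  have hh_int : Integrable h π := by
    refine Integrable.mono' (integrable_const M) hmeas.aestronglyMeasurable ?_
    exact Filter.Eventually.of_forall fun x ↦ by rw [Real.norm_eq_abs]; exact hbd x
  have hllr_tilted : Integrable (llr π (ρ.tilted h)) π :=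
    integrable_llr_tilted_right hπρ hh_int hllr hexp_int
  have hkey : ∫ x, llr π (ρ.tilted h) x ∂π
      = ∫ x, llr π ρ x ∂π - ∫ x, h x ∂π + Real.log Z := by
    rw [integral_llr_tilted_right hπρ hh_int hexp_int hllr, hZdef]
  have hrewrite : (∫ x, h x ∂π) - (∫ x, llr π ρ x ∂π)
      = Real.log Z - ∫ x, llr π (ρ.tilted h) x ∂π := by
    rw [hkey]; ring
  have hnonneg : 0 ≤ ∫ x, llr π (ρ.tilted h) x ∂π :=
    aux_integral_llr_nonneg hπtilted hllr_tilted
  constructor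
  · rw [hrewrite]; linarith
  · rw [hrewrite, hπh_tilted]
    constructor
    · intro heq
      have hzero : ∫ x, llr π (ρ.tilted h) x ∂π = 0 := by linarith
      exact aux_eq_of_llr_ae_zero hπtilted
        (aux_llr_ae_zero_of_integral_eq_zero hπtilted hllr_tilted hzero)
    · intro heq
      rw [heq]
      have : llr (ρ.tilted h) (ρ.tilted h) =ᵐ[ρ.tilted h] 0 := by
        filter_upwards [Measure.rnDeriv_self (ρ.tilted h)] with x hx
        simp [llr, hx]
      rw [integral_congr_ae this]
      simp
end

section
/- Let Ω ⊆ ℝ^d be a measurable set with finite positive Lebesgue measure, let λ ∈ (0,1) and η, β > 0, let Q : Ω → ℝ be bounded measurable, and let q, μ : Ω → ℝ be probability densities (with respect to Lebesgue measure on Ω) bounded above and below by positive constants. Define r(a) = μ(a)^λ · q(a)^{1−λ−1/η} · exp(Q(a)/β) and π_new(a) = r(a)/∫_Ω r, noting 0 < ∫_Ω r < ∞. Then the local fine-tuning objective J(π) = ∫_Ω π(a)[(1/β)Q(a) − (1/η)·log q(a)] da − (1−λ)·KL(π‖q) − λ·KL(π‖μ), defined for probability densities π on Ω (with values in [−∞,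 ∞), where the KL terms may be +∞), is uniquely maximized over all probability densities on Ω at π = π_new (uniqueness holding up to Lebesgue-almost-everywhere equality). -/
open MeasureTheory Classical

noncomputable def klE {α : Type*} [MeasurableSpace α] (ν : Measure α)
    (p f : α → ℝ) : EReal :=
  if Integrable (fun a => p a * Real.log (p a / f a)) ν
  then ((∫ a, p a * Real.log (p a / f a) ∂ν : ℝ) : EReal)
  else ⊤

def IsProbDensity {α : Type*} [MeasurableSpace α] (ν : Measure α) (p : α → ℝ) : Prop :=
  Measurable p ∧ (∀ᵐ a ∂ν, 0 ≤ p a) ∧ ∫ a, p a ∂ν = 1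

lemma gibbs_pt_le {x y : ℝ} (hx : 0 ≤ x) (hy : 0 < y) :
    x - y ≤ x * Real.log (x / y) := by
  rcases hx.eq_or_lt with h | h
  · rw [← h]; simp; linarith
  · have h1 : Real.log (y / x) ≤ y / x - 1 := Real.log_le_sub_one_of_pos (div_pos hy h)
    have h2 : Real.log (y / x) = - Real.log (x / y) := by
      rw [← Real.log_inv]; congr 1; field_simp
    have h3 : 1 - y / x ≤ Real.log (x / y) := by rw [h2] at h1; linarith
    have h4 : x * (1 - y / x) ≤ x * Real.log (x / y) :=
      mul_le_mul_of_nonneg_left h3 h.le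
    have h5 : x * (1 - y / x) = x - y := by field_simp
    linarith

lemma gibbs_pt_eq {x y : ℝ} (hx : 0 ≤ x) (hy : 0 < y)
    (h : x * Real.log (x / y) = x - y) : x = y := by
  rcases hx.eq_or_lt with h0 | h0
  · rw [← h0] at h; simp at h; linarith
  · by_contra hne
    have hyx : y / x ≠ 1 := by
      intro hyx1; apply hne; field_simp at hyx1; linarith
    have h1 : Real.log (y / x) < y / x - 1 :=
      Real.log_lt_sub_one_of_pos (div_pos hy h0) hyx
    have h2 : Real.log (y / x) = - Real.log (x / y) := by
      rw [← Real.log_inv]; congr 1; field_simp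
    have h3 : 1 - y / x < Real.log (x / y) := by rw [h2] at h1; linarith
    have h4 : x * (1 - y / x) < x * Real.log (x / y) :=
      (mul_lt_mul_iff_right₀ h0).mpr h3
    have h5 : x * (1 - y / x) = x - y := by field_simp
    linarith

lemma IsProbDensity.integrable' {α : Type*} [MeasurableSpace α] {ν : Measure α} {p : α → ℝ}
    (hp : IsProbDensity ν p) : Integrable p ν := by
  by_contra h
  have := hp.2.2
  rw [integral_undef h] at this
  exact one_ne_zero this.symm

lemma mul_bdd_integrable {α : Type*} [MeasurableSpace α] {ν : Measure α} {p g : α → ℝ}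
    (hp : Integrable p ν) (hg : AEStronglyMeasurable g ν) {K : ℝ}
    (hK : ∀ᵐ a ∂ν, |g a| ≤ K) : Integrable (fun a => p a * g a) ν := by
  refine Integrable.mono' (hp.norm.const_mul K) (hp.aestronglyMeasurable.mul hg) ?_
  filter_upwards [hK] with a ha
  rw [norm_mul]
  calc ‖p a‖ * ‖g a‖ ≤ ‖p a‖ * K :=
        mul_le_mul_of_nonneg_left (by rwa [Real.norm_eq_abs]) (norm_nonneg _)
    _ = K * ‖p a‖ := mul_comm _ _

lemma abs_log_le_of_mem {c C x : ℝ} (hc : 0 < c) (h1 : c ≤ x) (h2 : x ≤ C) :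
    |Real.log x| ≤ max |Real.log c| |Real.log C| := by
  have hx : 0 < x := lt_of_lt_of_le hc h1
  rw [abs_le]
  constructor
  · have hlc := Real.log_le_log hc h1
    have h3 : -|Real.log c| ≤ Real.log c := neg_abs_le _
    have h4 := le_max_left |Real.log c| |Real.log C|
    linarith
  · have hlC := Real.log_le_log hx h2
    have h3 := le_abs_self (Real.log C)
    have h4 := le_max_right |Real.log c| |Real.log C|
    linarith

lemma rpow_bounds {c C x e : ℝ} (hc : 0 < c) (h1 : c ≤ x) (h2 : x ≤ C) :
    min (c ^ e) (C ^ e) ≤ x ^ e ∧ x ^ e ≤ max (c ^ e) (C ^ e) := by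
  rcases le_or_gt 0 e with he | he
  · exact ⟨(min_le_left _ _).trans (Real.rpow_le_rpow hc.le h1 he),
      (Real.rpow_le_rpow (hc.trans_le h1).le h2 he).trans (le_max_right _ _)⟩
  · exact ⟨(min_le_right _ _).trans (Real.rpow_le_rpow_of_nonpos (hc.trans_le h1) h2 he.le),
      (Real.rpow_le_rpow_of_nonpos hc h1 he.le).trans (le_max_left _ _)⟩

lemma gibbs_integral {α : Type*} [MeasurableSpace α] {ν : Measure α} [IsFiniteMeasure ν]
    {p f : α → ℝ} (hp : IsProbDensity ν p) (hf : IsProbDensity ν f)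
    (hfpos : ∀ᵐ a ∂ν, 0 < f a)
    (hint : Integrable (fun a => p a * Real.log (p a / f a)) ν) :
    0 ≤ ∫ a, p a * Real.log (p a / f a) ∂ν ∧
      ((∫ a, p a * Real.log (p a / f a) ∂ν) = 0 → p =ᵐ[ν] f) := by
  have hpi := hp.integrable'
  have hfi := hf.integrable'
  set g : α → ℝ := fun a => p a * Real.log (p a / f a) - (p a - f a) with hg
  have hgi : Integrable g ν := hint.sub (hpi.sub hfi)
  have hg0 : ∀ᵐ a ∂ν, 0 ≤ g a := by
    filter_upwards [hp.2.1, hfpos] with a h1 h2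
    have := gibbs_pt_le h1 h2
    simp only [hg]; linarith
  have hgint : ∫ a, g a ∂ν = ∫ a, p a * Real.log (p a / f a) ∂ν := by
    have h1 : ∫ a, g a ∂ν
        = (∫ a, p a * Real.log (p a / f a) ∂ν) - ∫ a, (p a - f a) ∂ν :=
      integral_sub hint (hpi.sub hfi)
    rw [h1, integral_sub hpi hfi, hp.2.2, hf.2.2]; ring
  constructor
  · have := integral_nonneg_of_ae hg0
    rw [hgint] at this; exact this
  · intro hD
    have hz : ∫ a, g a ∂ν = 0 := by rw [hgint, hD]
    have hae := (integral_eq_zero_iff_of_nonneg_ae hg0 hgi).mp hz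
    filter_upwards [hae, hp.2.1, hfpos] with a ha h1 h2
    have ha' : p a * Real.log (p a / f a) = p a - f a := by
      have : g a = 0 := ha
      simp only [hg] at this; linarith
    exact gibbs_pt_eq h1 h2 ha'
noncomputable def Jobj {α : Type*} [MeasurableSpace α] (ν : Measure α)
    (Q q μ : α → ℝ) (l η β : ℝ) (p : α → ℝ) : EReal :=
  ((∫ a, p a * ((1 / β) * Q a - (1 / η) * Real.log (q a)) ∂ν : ℝ) : EReal)
    - ((1 - l : ℝ) : EReal) * klE ν p q - ((l : ℝ) : EReal) * klE ν p μ

lemma measurable_rpow_const' (e : ℝ) : Measurable fun x : ℝ => x ^ e := by measurability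

set_option maxHeartbeats 1000000 in
/-- **Closed form of a single Mirror Descent update.**
On a set `Ω ⊆ ℝ^d` of finite positive Lebesgue measure, with `λ ∈ (0,1)`, `η, β > 0`,
bounded measurable `Q`, and probability densities `q, μ` bounded above and below by
positive constants, the objective `J` is uniquely maximized over all probability
densities at `π_new = r/∫r` where `r = μ^λ · q^{1−λ−1/η} · exp(Q/β)`. -/
theorem mirror_descent_update_closed_form
    {d : ℕ} (Ω : Set (EuclideanSpace ℝ (Fin d))) (hΩ : MeasurableSet Ω)
    (hΩpos : 0 < volume Ω) (hΩfin : volume Ω < ⊤)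
    (l η β : ℝ) (hl : l ∈ Set.Ioo (0 : ℝ) 1) (hη : 0 < η) (hβ : 0 < β)
    (Q : EuclideanSpace ℝ (Fin d) → ℝ) (hQm : Measurable Q)
    (MQ : ℝ) (hQbd : ∀ a ∈ Ω, |Q a| ≤ MQ)
    (q μ : EuclideanSpace ℝ (Fin d) → ℝ)
    (hq : IsProbDensity (volume.restrict Ω) q)
    (hμ : IsProbDensity (volume.restrict Ω) μ)
    (c C : ℝ) (hc : 0 < c)
    (hqbd : ∀ a ∈ Ω, c ≤ q a ∧ q a ≤ C) (hμbd : ∀ a ∈ Ω, c ≤ μ a ∧ μ a ≤ C)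
    (r : EuclideanSpace ℝ (Fin d) → ℝ)
    (hr : ∀ a, r a = μ a ^ l * q a ^ (1 - l - 1 / η) * Real.exp (Q a / β))
    (πnew : EuclideanSpace ℝ (Fin d) → ℝ)
    (hπnew : ∀ a, πnew a = r a / ∫ a, r a ∂(volume.restrict Ω)) :
    Integrable r (volume.restrict Ω) ∧
    0 < ∫ a, r a ∂(volume.restrict Ω) ∧
    IsProbDensity (volume.restrict Ω) πnew ∧
    ∀ p : EuclideanSpace ℝ (Fin d) → ℝ, IsProbDensity (volume.restrict Ω) p →
      (Jobj (volume.restrict Ω) Q q μ l η β p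
          ≤ Jobj (volume.restrict Ω) Q q μ l η β πnew ∧
       (Jobj (volume.restrict Ω) Q q μ l η β p
          = Jobj (volume.restrict Ω) Q q μ l η β πnew →
        p =ᵐ[volume.restrict Ω] πnew)) := by
  obtain ⟨hl0, hl1⟩ := hl
  set ν := volume.restrict Ω with hν
  haveI : IsFiniteMeasure ν := ⟨by rw [hν, Measure.restrict_apply_univ]; exact hΩfin⟩
  have hmem : ∀ᵐ a ∂ν, a ∈ Ω := ae_restrict_mem hΩ
  have hΩne : Ω.Nonempty := by
    rcases Set.eq_empty_or_nonempty Ω with h | h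
    · rw [h] at hΩpos; simp at hΩpos
    · exact h
  obtain ⟨a₀, ha₀⟩ := hΩne
  have hcC : c ≤ C := le_trans (hqbd a₀ ha₀).1 (hqbd a₀ ha₀).2
  have hCpos : 0 < C := lt_of_lt_of_le hc hcC
  set e : ℝ := 1 - l - 1 / η with he
  set r₀ : ℝ := min (c ^ l) (C ^ l) * min (c ^ e) (C ^ e) * Real.exp (-(MQ / β)) with hr₀
  set r₁ : ℝ := max (c ^ l) (C ^ l) * max (c ^ e) (C ^ e) * Real.exp (MQ / β) with hr₁
  have hminl : 0 < min (c ^ l) (C ^ l) :=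
    lt_min (Real.rpow_pos_of_pos hc _) (Real.rpow_pos_of_pos hCpos _)
  have hmine : 0 < min (c ^ e) (C ^ e) :=
    lt_min (Real.rpow_pos_of_pos hc _) (Real.rpow_pos_of_pos hCpos _)
  have hmaxl : 0 < max (c ^ l) (C ^ l) := lt_max_of_lt_left (Real.rpow_pos_of_pos hc _)
  have hmaxe : 0 < max (c ^ e) (C ^ e) := lt_max_of_lt_left (Real.rpow_pos_of_pos hc _)
  have hr₀pos : 0 < r₀ := mul_pos (mul_pos hminl hmine) (Real.exp_pos _)
  have hrbd : ∀ a ∈ Ω, r₀ ≤ r a ∧ r a ≤ r₁ := by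
    intro a ha
    obtain ⟨hq1, hq2⟩ := hqbd a ha
    obtain ⟨hm1, hm2⟩ := hμbd a ha
    have hQa := abs_le.mp (hQbd a ha)
    have h1 := rpow_bounds (e := l) hc hm1 hm2
    have h2 := rpow_bounds (e := e) hc hq1 hq2
    have hexp1 : Real.exp (-(MQ / β)) ≤ Real.exp (Q a / β) :=
      Real.exp_le_exp.mpr (by rw [← neg_div]; exact (div_le_div_iff_of_pos_right hβ).mpr hQa.1)
    have hexp2 : Real.exp (Q a / β) ≤ Real.exp (MQ / β) :=
      Real.exp_le_exp.mpr ((div_le_div_iff_of_pos_right hβ).mpr hQa.2)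
    have hμl : 0 ≤ μ a ^ l := (Real.rpow_pos_of_pos (lt_of_lt_of_le hc hm1) _).le
    have hqe : 0 ≤ q a ^ e := (Real.rpow_pos_of_pos (lt_of_lt_of_le hc hq1) _).le
    rw [hr a]
    constructor
    · exact mul_le_mul (mul_le_mul h1.1 h2.1 hmine.le hμl) hexp1 (Real.exp_pos _).le
        (mul_nonneg hμl hqe)
    · exact mul_le_mul (mul_le_mul h1.2 h2.2 hqe hmaxl.le) hexp2 (Real.exp_pos _).le
        (mul_nonneg hmaxl.le hmaxe.le)
  have hrm : Measurable r := by
    have hre : r = fun a => μ a ^ l * q a ^ e * Real.exp (Q a / β) := funext hr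
    rw [hre]
    have h1 : Measurable fun a => μ a ^ l := (measurable_rpow_const' l).comp hμ.1
    have h2 : Measurable fun a => q a ^ e := (measurable_rpow_const' e).comp hq.1
    have h3 : Measurable fun a => Real.exp (Q a / β) :=
      Real.measurable_exp.comp (hQm.div_const β)
    exact (h1.mul h2).mul h3
  have hr_int : Integrable r ν := by
    refine Integrable.mono' (integrable_const r₁) hrm.aestronglyMeasurable ?_
    filter_upwards [hmem] with a ha
    rw [Real.norm_eq_abs, abs_of_nonneg (le_trans hr₀pos.le (hrbd a ha).1)]
    exact (hrbd a ha).2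
  set Z : ℝ := ∫ a, r a ∂ν with hZ
  have hvolpos : 0 < (volume Ω).toReal := ENNReal.toReal_pos hΩpos.ne' hΩfin.ne
  have hZlb : r₀ * (volume Ω).toReal ≤ Z := by
    have h := integral_mono_ae (integrable_const r₀) hr_int
      (by filter_upwards [hmem] with a ha using (hrbd a ha).1)
    rwa [integral_const, hν, Measure.real, Measure.restrict_apply_univ, smul_eq_mul, mul_comm] at h
  have hZpos : 0 < Z := lt_of_lt_of_le (mul_pos hr₀pos hvolpos) hZlb
  have hπm : Measurable πnew := by
    have : πnew = fun a => r a / Z := funext hπnew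
    rw [this]; exact hrm.div_const Z
  have hπbd : ∀ a ∈ Ω, r₀ / Z ≤ πnew a ∧ πnew a ≤ r₁ / Z := by
    intro a ha
    rw [hπnew a]
    exact ⟨(div_le_div_iff_of_pos_right hZpos).mpr (hrbd a ha).1,
      (div_le_div_iff_of_pos_right hZpos).mpr (hrbd a ha).2⟩
  have hπlb : 0 < r₀ / Z := div_pos hr₀pos hZpos
  have hπpos : ∀ᵐ a ∂ν, 0 < πnew a := by
    filter_upwards [hmem] with a ha
    exact lt_of_lt_of_le hπlb (hπbd a ha).1
  have hπint : ∫ a, πnew a ∂ν = 1 := by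
    have h1 : ∫ a, πnew a ∂ν = ∫ a, r a / Z ∂ν := by
      congr 1; exact funext hπnew
    rw [h1, integral_div, ← hZ, div_self hZpos.ne']
  have hπ : IsProbDensity ν πnew :=
    ⟨hπm, by filter_upwards [hπpos] with a ha using ha.le, hπint⟩
  have hπi : Integrable πnew ν := hπ.integrable'
  -- bounded log facts
  set Kq : ℝ := max |Real.log c| |Real.log C| with hKq
  have hlogq : ∀ᵐ a ∂ν, |Real.log (q a)| ≤ Kq := by
    filter_upwards [hmem] with a ha
    exact abs_log_le_of_mem hc (hqbd a ha).1 (hqbd a ha).2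
  have hlogμ : ∀ᵐ a ∂ν, |Real.log (μ a)| ≤ Kq := by
    filter_upwards [hmem] with a ha
    exact abs_log_le_of_mem hc (hμbd a ha).1 (hμbd a ha).2
  set Kr : ℝ := max |Real.log r₀| |Real.log r₁| with hKr
  have hlogr : ∀ᵐ a ∂ν, |Real.log (r a)| ≤ Kr := by
    filter_upwards [hmem] with a ha
    exact abs_log_le_of_mem hr₀pos (hrbd a ha).1 (hrbd a ha).2
  -- key computation for densities with finite KL terms
  have key : ∀ p : EuclideanSpace ℝ (Fin d) → ℝ, IsProbDensity ν p →
      Integrable (fun a => p a * Real.log (p a / q a)) ν →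
      Integrable (fun a => p a * Real.log (p a / μ a)) ν →
      Integrable (fun a => p a * Real.log (p a / πnew a)) ν ∧
      Jobj ν Q q μ l η β p =
        ((Real.log Z - ∫ a, p a * Real.log (p a / πnew a) ∂ν : ℝ) : EReal) := by
    intro p hp hK1 hK2
    have hpi := hp.integrable'
    have hG : Integrable (fun a => p a * Real.log (p a / πnew a)) ν := by
      have hGae : (fun a => p a * Real.log (p a / q a)
            + p a * (Real.log (q a) - Real.log (r a) + Real.log Z)) =ᵐ[ν]
          fun a => p a * Real.log (p a / πnew a) := by
        filter_upwards [hmem, hp.2.1] with a ha hpa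
        rcases hpa.eq_or_lt with h0 | h0
        · simp [← h0]
        · have hqa : (0 : ℝ) < q a := lt_of_lt_of_le hc (hqbd a ha).1
          have hra : (0 : ℝ) < r a := lt_of_lt_of_le hr₀pos (hrbd a ha).1
          rw [hπnew a, Real.log_div h0.ne' (div_pos hra hZpos).ne',
            Real.log_div hra.ne' hZpos.ne', Real.log_div h0.ne' hqa.ne']
          ring
      have hbdd : Integrable
          (fun a => p a * (Real.log (q a) - Real.log (r a) + Real.log Z)) ν := by
        refine mul_bdd_integrable hpi ?_ (K := Kq + Kr + |Real.log Z|) ?_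
        · exact (((Real.measurable_log.comp hq.1).sub
            (Real.measurable_log.comp hrm)).add measurable_const).aestronglyMeasurable
        · filter_upwards [hlogq, hlogr] with a h1 h2
          calc |Real.log (q a) - Real.log (r a) + Real.log Z|
              ≤ |Real.log (q a) - Real.log (r a)| + |Real.log Z| := abs_add_le _ _
            _ ≤ (|Real.log (q a)| + |Real.log (r a)|) + |Real.log Z| := by
                have := abs_sub (Real.log (q a)) (Real.log (r a)); linarith
            _ ≤ Kq + Kr + |Real.log Z| := by linarith
      exact Integrable.congr (hK1.add hbdd) hGae
    refine ⟨hG, ?_⟩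
    have hF1 : Integrable (fun a => p a * ((1 / β) * Q a - (1 / η) * Real.log (q a))) ν := by
      refine mul_bdd_integrable hpi ?_ (K := (1 / β) * MQ + (1 / η) * Kq) ?_
      · exact ((hQm.const_mul _).sub
          ((Real.measurable_log.comp hq.1).const_mul _)).aestronglyMeasurable
      · filter_upwards [hmem, hlogq] with a ha h1
        have h2 := hQbd a ha
        calc |(1 / β) * Q a - (1 / η) * Real.log (q a)|
            ≤ |(1 / β) * Q a| + |(1 / η) * Real.log (q a)| := abs_sub _ _
          _ = (1 / β) * |Q a| + (1 / η) * |Real.log (q a)| := by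
              rw [abs_mul, abs_mul, abs_of_pos (by positivity : (0:ℝ) < 1 / β),
                abs_of_pos (by positivity : (0:ℝ) < 1 / η)]
          _ ≤ (1 / β) * MQ + (1 / η) * Kq := by
              have hb : (0:ℝ) ≤ 1 / β := by positivity
              have he' : (0:ℝ) ≤ 1 / η := by positivity
              have := mul_le_mul_of_nonneg_left h2 hb
              have := mul_le_mul_of_nonneg_left h1 he'
              linarith
    have hsum : (fun a => p a * ((1 / β) * Q a - (1 / η) * Real.log (q a))
        - (1 - l) * (p a * Real.log (p a / q a)) - l * (p a * Real.log (p a / μ a))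
        + p a * Real.log (p a / πnew a)) =ᵐ[ν] fun a => p a * Real.log Z := by
      filter_upwards [hmem, hp.2.1] with a ha hpa
      rcases hpa.eq_or_lt with h0 | h0
      · simp [← h0]
      · have hqa : (0 : ℝ) < q a := lt_of_lt_of_le hc (hqbd a ha).1
        have hμa : (0 : ℝ) < μ a := lt_of_lt_of_le hc (hμbd a ha).1
        have hra : (0 : ℝ) < r a := lt_of_lt_of_le hr₀pos (hrbd a ha).1
        have hlr : Real.log (r a) = l * Real.log (μ a) + e * Real.log (q a) + Q a / β := by
          rw [hr a, Real.log_mul (by positivity) (Real.exp_pos _).ne',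
            Real.log_mul (Real.rpow_pos_of_pos hμa _).ne' (Real.rpow_pos_of_pos hqa _).ne',
            Real.log_rpow hμa, Real.log_rpow hqa, Real.log_exp]
        rw [hπnew a, Real.log_div h0.ne' (div_pos hra hZpos).ne',
          Real.log_div hra.ne' hZpos.ne', Real.log_div h0.ne' hqa.ne',
          Real.log_div h0.ne' hμa.ne', hlr, he]
        field_simp
        ring
    have hFint : Integrable (fun a => p a * ((1 / β) * Q a - (1 / η) * Real.log (q a))
        - (1 - l) * (p a * Real.log (p a / q a)) - l * (p a * Real.log (p a / μ a))) ν :=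
      (hF1.sub (hK1.const_mul (1 - l))).sub (hK2.const_mul l)
    have hIsum : (∫ a, (p a * ((1 / β) * Q a - (1 / η) * Real.log (q a))
        - (1 - l) * (p a * Real.log (p a / q a)) - l * (p a * Real.log (p a / μ a))) ∂ν)
        + ∫ a, p a * Real.log (p a / πnew a) ∂ν = Real.log Z := by
      have h1 : ∫ a, (p a * ((1 / β) * Q a - (1 / η) * Real.log (q a))
          - (1 - l) * (p a * Real.log (p a / q a)) - l * (p a * Real.log (p a / μ a))
          + p a * Real.log (p a / πnew a)) ∂ν = ∫ a, p a * Real.log Z ∂ν :=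
        integral_congr_ae hsum
      rw [integral_add hFint hG] at h1
      rw [h1, integral_mul_const, hp.2.2, one_mul]
    have hIF : (∫ a, (p a * ((1 / β) * Q a - (1 / η) * Real.log (q a))
        - (1 - l) * (p a * Real.log (p a / q a)) - l * (p a * Real.log (p a / μ a))) ∂ν)
        = (∫ a, p a * ((1 / β) * Q a - (1 / η) * Real.log (q a)) ∂ν)
          - (1 - l) * (∫ a, p a * Real.log (p a / q a) ∂ν)
          - l * ∫ a, p a * Real.log (p a / μ a) ∂ν := by
      have h2 : Integrable (fun a => p a * ((1 / β) * Q a - (1 / η) * Real.log (q a))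
          - (1 - l) * (p a * Real.log (p a / q a))) ν := hF1.sub (hK1.const_mul (1 - l))
      have step1 : (∫ a, (p a * ((1 / β) * Q a - (1 / η) * Real.log (q a))
          - (1 - l) * (p a * Real.log (p a / q a)) - l * (p a * Real.log (p a / μ a))) ∂ν)
          = (∫ a, (p a * ((1 / β) * Q a - (1 / η) * Real.log (q a))
            - (1 - l) * (p a * Real.log (p a / q a))) ∂ν)
            - ∫ a, l * (p a * Real.log (p a / μ a)) ∂ν :=
        integral_sub h2 (hK2.const_mul l)
      have step2 : (∫ a, (p a * ((1 / β) * Q a - (1 / η) * Real.log (q a))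
          - (1 - l) * (p a * Real.log (p a / q a))) ∂ν)
          = (∫ a, p a * ((1 / β) * Q a - (1 / η) * Real.log (q a)) ∂ν)
            - ∫ a, (1 - l) * (p a * Real.log (p a / q a)) ∂ν :=
        integral_sub hF1 (hK1.const_mul (1 - l))
      have step3 : (∫ a, (1 - l) * (p a * Real.log (p a / q a)) ∂ν)
          = (1 - l) * ∫ a, p a * Real.log (p a / q a) ∂ν := integral_const_mul _ _
      have step4 : (∫ a, l * (p a * Real.log (p a / μ a)) ∂ν)
          = l * ∫ a, p a * Real.log (p a / μ a) ∂ν := integral_const_mul _ _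
      rw [step1, step2, step3, step4]
    unfold Jobj klE
    rw [if_pos hK1, if_pos hK2]
    rw [← EReal.coe_mul, ← EReal.coe_mul, ← EReal.coe_sub, ← EReal.coe_sub,
      EReal.coe_eq_coe_iff]
    rw [hIF] at hIsum
    linarith
  -- πnew has finite KL terms
  have hπK : ∀ f : EuclideanSpace ℝ (Fin d) → ℝ, Measurable f →
      (∀ a ∈ Ω, c ≤ f a ∧ f a ≤ C) →
      Integrable (fun a => πnew a * Real.log (πnew a / f a)) ν := by
    intro f hfm hfbd
    refine mul_bdd_integrable hπi
      ((Real.measurable_log.comp (hπm.div hfm)).aestronglyMeasurable)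
      (K := max |Real.log (r₀ / Z / C)| |Real.log (r₁ / Z / c)|) ?_
    filter_upwards [hmem] with a ha
    have h1 := hπbd a ha
    have h2 := hfbd a ha
    have hfa : 0 < f a := lt_of_lt_of_le hc h2.1
    have hlo : r₀ / Z / C ≤ πnew a / f a :=
      div_le_div₀ (le_trans hπlb.le h1.1) h1.1 hfa h2.2
    have hhi : πnew a / f a ≤ r₁ / Z / c :=
      div_le_div₀ (le_trans (le_trans hπlb.le h1.1) h1.2) h1.2 hc h2.1
    exact abs_log_le_of_mem (div_pos hπlb hCpos) hlo hhi
  have hπK1 := hπK q hq.1 hqbd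
  have hπK2 := hπK μ hμ.1 hμbd
  obtain ⟨hGπ, hJπ⟩ := key πnew hπ hπK1 hπK2
  have hDπ : ∫ a, πnew a * Real.log (πnew a / πnew a) ∂ν = 0 := by
    apply integral_eq_zero_of_ae
    filter_upwards [hπpos] with a ha
    rw [div_self ha.ne', Real.log_one, mul_zero]; rfl
  have hJπ' : Jobj ν Q q μ l η β πnew = ((Real.log Z : ℝ) : EReal) := by
    rw [hJπ, hDπ, sub_zero]
  refine ⟨hr_int, hZpos, hπ, ?_⟩
  intro p hp
  by_cases hK2 : Integrable (fun a => p a * Real.log (p a / μ a)) ν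
  · by_cases hK1 : Integrable (fun a => p a * Real.log (p a / q a)) ν
    · obtain ⟨hG, hJp⟩ := key p hp hK1 hK2
      have hgibbs := gibbs_integral hp hπ hπpos hG
      constructor
      · rw [hJp, hJπ']
        exact EReal.coe_le_coe_iff.mpr (by linarith [hgibbs.1])
      · intro heq
        rw [hJp, hJπ', EReal.coe_eq_coe_iff] at heq
        exact hgibbs.2 (by linarith)
    · have hbot : Jobj ν Q q μ l η β p = ⊥ := by
        unfold Jobj klE
        rw [if_neg hK1, EReal.coe_mul_top_of_pos (by linarith : (0:ℝ) < 1 - l),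
          EReal.sub_top, EReal.bot_sub]
      constructor
      · rw [hbot]; exact bot_le
      · intro heq
        rw [hbot, hJπ'] at heq
        exact absurd heq (EReal.bot_ne_coe _)
  · have hbot : Jobj ν Q q μ l η β p = ⊥ := by
      unfold Jobj klE
      rw [if_neg hK2, EReal.coe_mul_top_of_pos hl0, EReal.sub_top]
    constructor
    · rw [hbot]; exact bot_le
    · intro heq
      rw [hbot, hJπ'] at heq
      exact absurd heq (EReal.bot_ne_coe _)
end

section
/- Let Ω ⊆ ℝ^d be a measurable set equipped with Lebesgue measure, let λ ∈ (0,1) and η, β > 0, let Q : Ω → ℝ be measurable, and let μ : Ω → ℝ be a strictly positive probability density on Ω. Define δ = λη/(1+λη) ∈ (0,1) and κ = β(1+λη)/η > 0. Suppose q : Ω → ℝ is a strictly positive probability density satisfying, for some constant ν ∈ ℝ, the stationarity condition (1/β)Q(a) − (1/η)·log q(a) − log q(a) − 1 + (1−λ)·log q(a) + λ·log μ(a) − ν = 0 for Lebesgue-almost-every a ∈ Ω. Then Z := ∫_Ω μ(a)^δ · exp(Q(a)/κ) da is finite and positive, q(a) = (1/Z)·μ(a)^δ·exp(Q(a)/κ)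 for almost every a ∈ Ω, and moreover Z = exp((1+ν)η/(1+λη)); consequently any two strictly positive probability densities satisfying such a stationarity condition (for possibly different constants ν) coincide almost everywhere. -/
open MeasureTheory

lemma stationary_key {d : ℕ} (Ω : Set (EuclideanSpace ℝ (Fin d))) (hΩ : MeasurableSet Ω)
    (l η β : ℝ) (hl : 0 < l) (hη : 0 < η) (hβ : 0 < β)
    (Q μ q : EuclideanSpace ℝ (Fin d) → ℝ)
    (hμpos : ∀ a ∈ Ω, 0 < μ a) (hqpos : ∀ a ∈ Ω, 0 < q a) (νc : ℝ)
    (hstat : ∀ᵐ a ∂(volume.restrict Ω),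
      (1 / β) * Q a - (1 / η) * Real.log (q a) - Real.log (q a) - 1
        + (1 - l) * Real.log (q a) + l * Real.log (μ a) - νc = 0) :
    (fun a => μ a ^ (l * η / (1 + l * η)) * Real.exp (Q a / (β * (1 + l * η) / η)))
      =ᵐ[volume.restrict Ω]
      fun a => Real.exp ((1 + νc) * η / (1 + l * η)) * q a := by
  have hmem : ∀ᵐ a ∂(volume.restrict Ω), a ∈ Ω := ae_restrict_mem hΩ
  have h1 : (0:ℝ) < 1 + l * η := by positivity
  filter_upwards [hstat, hmem] with a ha haΩ
  have hμa := hμpos a haΩ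
  have hqa := hqpos a haΩ
  have hrw : μ a ^ (l * η / (1 + l * η)) =
      Real.exp (Real.log (μ a) * (l * η / (1 + l * η))) := by
    rw [Real.rpow_def_of_pos hμa]
  rw [hrw, ← Real.exp_add]
  have hq' : q a = Real.exp (Real.log (q a)) := (Real.exp_log hqa).symm
  conv_rhs => rw [hq']
  rw [← Real.exp_add]
  congr 1
  have hβ' : β ≠ 0 := ne_of_gt hβ
  have hη' : η ≠ 0 := ne_of_gt hη
  have h1' : (1 + l * η) ≠ 0 := ne_of_gt h1
  have hL : Real.log (q a) * (β * (1 + l * η)) =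
      η * Q a + η * β * l * Real.log (μ a) - η * β * (1 + νc) := by
    field_simp at ha
    ring_nf at ha ⊢
    linarith [ha]
  field_simp
  linear_combination (-1) * hL

/-- **Optimal Stationary Policy of ME-AM.**
On a measurable `Ω ⊆ ℝ^d` with Lebesgue measure, let `λ ∈ (0,1)`, `η, β > 0`,
`δ = λη/(1+λη)`, `κ = β(1+λη)/η`. If the strictly positive probability density `q`
satisfies the stationarity (Euler–Lagrange) condition
`(1/β)Q − (1/η)log q − log q − 1 + (1−λ)log q + λ log μ − ν = 0` a.e. for some
Lagrange constant `ν`, then `Z = ∫ μ^δ exp(Q/κ)` is finite and positive,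
`q = μ^δ exp(Q/κ)/Z` a.e., `Z = exp((1+ν)η/(1+λη))`, and any two strictly positive
probability densities satisfying such a condition coincide a.e. -/
theorem optimal_stationary_policy
    {d : ℕ} (Ω : Set (EuclideanSpace ℝ (Fin d))) (hΩ : MeasurableSet Ω)
    (l η β : ℝ) (hl : l ∈ Set.Ioo (0 : ℝ) 1) (hη : 0 < η) (hβ : 0 < β)
    (Q : EuclideanSpace ℝ (Fin d) → ℝ) (hQm : Measurable Q)
    (μ : EuclideanSpace ℝ (Fin d) → ℝ)
    (hμ : IsProbDensity (volume.restrict Ω) μ) (hμpos : ∀ a ∈ Ω, 0 < μ a)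
    (δ κ : ℝ) (hδ : δ = l * η / (1 + l * η)) (hκ : κ = β * (1 + l * η) / η)
    (q : EuclideanSpace ℝ (Fin d) → ℝ)
    (hq : IsProbDensity (volume.restrict Ω) q) (hqpos : ∀ a ∈ Ω, 0 < q a)
    (νc : ℝ)
    (hstat : ∀ᵐ a ∂(volume.restrict Ω),
      (1 / β) * Q a - (1 / η) * Real.log (q a) - Real.log (q a) - 1
        + (1 - l) * Real.log (q a) + l * Real.log (μ a) - νc = 0) :
    Integrable (fun a => μ a ^ δ * Real.exp (Q a / κ)) (volume.restrict Ω) ∧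
    0 < ∫ a, μ a ^ δ * Real.exp (Q a / κ) ∂(volume.restrict Ω) ∧
    (q =ᵐ[volume.restrict Ω] fun a =>
      μ a ^ δ * Real.exp (Q a / κ)
        / ∫ a, μ a ^ δ * Real.exp (Q a / κ) ∂(volume.restrict Ω)) ∧
    (∫ a, μ a ^ δ * Real.exp (Q a / κ) ∂(volume.restrict Ω))
      = Real.exp ((1 + νc) * η / (1 + l * η)) ∧
    ∀ (q' : EuclideanSpace ℝ (Fin d) → ℝ) (νc' : ℝ),
      IsProbDensity (volume.restrict Ω) q' → (∀ a ∈ Ω, 0 < q' a) →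
      (∀ᵐ a ∂(volume.restrict Ω),
        (1 / β) * Q a - (1 / η) * Real.log (q' a) - Real.log (q' a) - 1
          + (1 - l) * Real.log (q' a) + l * Real.log (μ a) - νc' = 0) →
      q' =ᵐ[volume.restrict Ω] q := by
  obtain ⟨hl0, hl1⟩ := hl
  subst hδ hκ
  set c : ℝ := (1 + νc) * η / (1 + l * η) with hc
  have hae := stationary_key Ω hΩ l η β hl0 hη hβ Q μ q hμpos hqpos νc hstat
  -- q is integrable
  have hqint : Integrable q (volume.restrict Ω) := by
    by_contra h
    have := integral_undef h
    rw [hq.2.2] at this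
    norm_num at this
  have hint : Integrable (fun a => μ a ^ (l * η / (1 + l * η)) *
      Real.exp (Q a / (β * (1 + l * η) / η))) (volume.restrict Ω) := by
    refine (Integrable.congr ?_ hae.symm)
    exact hqint.const_mul _
  have hZ : (∫ a, μ a ^ (l * η / (1 + l * η)) *
      Real.exp (Q a / (β * (1 + l * η) / η)) ∂(volume.restrict Ω)) = Real.exp c := by
    rw [integral_congr_ae hae, integral_const_mul, hq.2.2, mul_one]
  refine ⟨hint, ?_, ?_, hZ, ?_⟩
  · rw [hZ]; exact Real.exp_pos c
  · rw [hZ]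
    filter_upwards [hae] with a ha
    rw [ha, ← hc, mul_div_assoc]
    field_simp
  · intro q' νc' hq' hq'pos hstat'
    have hae' := stationary_key Ω hΩ l η β hl0 hη hβ Q μ q' hμpos hq'pos νc' hstat'
    have hq'int : Integrable q' (volume.restrict Ω) := by
      by_contra h
      have := integral_undef h
      rw [hq'.2.2] at this
      norm_num at this
    set c' : ℝ := (1 + νc') * η / (1 + l * η) with hc'
    have hZ' : (∫ a, μ a ^ (l * η / (1 + l * η)) *
        Real.exp (Q a / (β * (1 + l * η) / η)) ∂(volume.restrict Ω)) = Real.exp c' := by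
      rw [integral_congr_ae hae', integral_const_mul, hq'.2.2, mul_one]
    have hcc : Real.exp c' = Real.exp c := by rw [← hZ, ← hZ']
    filter_upwards [hae, hae'] with a h1 h2
    have : Real.exp c * q a = Real.exp c * q' a := by
      rw [← h1, h2, hcc]
    exact (mul_left_cancel₀ (Real.exp_ne_zero c) this).symm
end

section
/- Let ν be a probability measure on ℝ^d, let σ > 0, and let φ_σ(x) = (2πσ²)^{−d/2}·exp(−‖x‖²/(2σ²)) be the centered Gaussian density on ℝ^d. Define the Gaussian-smoothed density p_σ(x) = ∫ φ_σ(x−y) dν(y). Then p_σ is strictly positive and differentiable on ℝ^d, the integral m_σ(x) = (∫ y·φ_σ(x−y) dν(y)) / p_σ(x) is well-defined (the numerator converges absolutely for every x), and for every x ∈ ℝ^d the score of the smoothed density satisfies ∇ log p_σ(x) = (m_σ(x) − x)/σ². -/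
open MeasureTheory InnerProductSpace

set_option maxHeartbeats 1000000 in
set_option synthInstance.maxHeartbeats 400000 in
/-- **Tweedie's formula / denoising score identity.**
For a probability measure `ν` on `ℝ^d` and `σ > 0`, the Gaussian-smoothed density
`p_σ(x) = ∫ φ_σ(x−y) dν(y)` is strictly positive and differentiable, the posterior
mean `m_σ(x) = (∫ y·φ_σ(x−y) dν(y))/p_σ(x)` is well-defined (the numerator converges
absolutely for every `x`), and the score satisfies
`∇ log p_σ(x) = (m_σ(x) − x)/σ²`. -/
theorem tweedie_smoothed_score
    {d : ℕ} (ν : Measure (EuclideanSpace ℝ (Fin d))) [IsProbabilityMeasure ν]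
    (σ : ℝ) (hσ : 0 < σ)
    (φσ : EuclideanSpace ℝ (Fin d) → ℝ)
    (hφσ : ∀ x, φσ x = (2 * Real.pi * σ ^ 2) ^ (-(d : ℝ) / 2)
        * Real.exp (-‖x‖ ^ 2 / (2 * σ ^ 2)))
    (pσ : EuclideanSpace ℝ (Fin d) → ℝ)
    (hpσ : ∀ x, pσ x = ∫ y, φσ (x - y) ∂ν)
    (mσ : EuclideanSpace ℝ (Fin d) → EuclideanSpace ℝ (Fin d))
    (hmσ : ∀ x, mσ x = (pσ x)⁻¹ • ∫ y, φσ (x - y) • y ∂ν) :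
    (∀ x, 0 < pσ x) ∧
    Differentiable ℝ pσ ∧
    (∀ x, Integrable (fun y => φσ (x - y) • y) ν) ∧
    (∀ x, gradient (fun z => Real.log (pσ z)) x = (σ ^ 2)⁻¹ • (mσ x - x)) := by
  set c : ℝ := (2 * Real.pi * σ ^ 2) ^ (-(d : ℝ) / 2) with hc
  have hcpos : 0 < c := Real.rpow_pos_of_pos (by positivity) _
  have hφpos : ∀ x : EuclideanSpace ℝ (Fin d), 0 < φσ x := fun x => by
    rw [hφσ]; positivity
  have hφle : ∀ x : EuclideanSpace ℝ (Fin d), φσ x ≤ c := by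
    intro x
    rw [hφσ]
    calc c * Real.exp (-‖x‖ ^ 2 / (2 * σ ^ 2)) ≤ c * 1 := by
          gcongr
          rw [Real.exp_le_one_iff]
          have h0 : (0:ℝ) ≤ ‖x‖ ^ 2 / (2 * σ ^ 2) := by positivity
          rw [neg_div]; linarith
      _ = c := mul_one c
  have hφcont : Continuous φσ := by
    have h : φσ = fun x : EuclideanSpace ℝ (Fin d) =>
        c * Real.exp (-‖x‖ ^ 2 / (2 * σ ^ 2)) := funext hφσ
    rw [h]; fun_prop
  -- key scalar bound : t * exp(-t^2/(2σ^2)) ≤ σ for t ≥ 0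
  have texp : ∀ t : ℝ, 0 ≤ t → t * Real.exp (-t ^ 2 / (2 * σ ^ 2)) ≤ σ := by
    intro t ht
    have h2 : t ≤ σ * Real.exp (t ^ 2 / (2 * σ ^ 2)) := by
      have he := Real.add_one_le_exp (t ^ 2 / (2 * σ ^ 2))
      have h3 : σ * (t ^ 2 / (2 * σ ^ 2) + 1) ≤ σ * Real.exp (t ^ 2 / (2 * σ ^ 2)) :=
        mul_le_mul_of_nonneg_left he hσ.le
      refine le_trans ?_ h3
      have h5 : σ * (t ^ 2 / (2 * σ ^ 2) + 1) = (t ^ 2 + 2 * σ ^ 2) / (2 * σ) := by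
        field_simp
      rw [h5, le_div_iff₀ (by positivity)]
      nlinarith [sq_nonneg (t - σ)]
    rw [neg_div, Real.exp_neg, ← div_eq_mul_inv, div_le_iff₀ (Real.exp_pos _)]
    linarith
  -- bound for the gradient integrand
  have hφgrad_bd : ∀ x y : EuclideanSpace ℝ (Fin d), φσ (x - y) * ‖x - y‖ ≤ c * σ := by
    intro x y
    rw [hφσ, mul_assoc]
    gcongr
    rw [mul_comm]
    exact texp _ (norm_nonneg _)
  -- integrability of y ↦ φσ (x - y)
  have hI1 : ∀ x : EuclideanSpace ℝ (Fin d), Integrable (fun y => φσ (x - y)) ν := by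
    intro x
    refine Integrable.mono' (integrable_const c)
      ((hφcont.comp (continuous_const.sub continuous_id)).aestronglyMeasurable)
      (ae_of_all _ fun y => ?_)
    rw [Real.norm_eq_abs, abs_of_pos (hφpos _)]
    exact hφle _
  -- positivity of pσ
  have hppos : ∀ x, 0 < pσ x := by
    intro x
    rw [hpσ]
    have hsupp : Function.support (fun y => φσ (x - y)) = Set.univ := by
      ext y; simp [Function.mem_support, (hφpos (x - y)).ne']
    rw [integral_pos_iff_support_of_nonneg (fun y => (hφpos (x - y)).le) (hI1 x), hsupp]
    simp
  have hne : ∀ x, pσ x ≠ 0 := fun x => (hppos x).ne'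
  -- integrability of y ↦ φσ (x - y) • y
  have hI3 : ∀ x : EuclideanSpace ℝ (Fin d), Integrable (fun y => φσ (x - y) • y) ν := by
    intro x
    refine Integrable.mono' (integrable_const (c * ‖x‖ + c * σ))
      (((hφcont.comp (continuous_const.sub continuous_id)).smul continuous_id).aestronglyMeasurable)
      (ae_of_all _ fun y => ?_)
    rw [norm_smul, Real.norm_eq_abs, abs_of_pos (hφpos _)]
    have hy : ‖y‖ ≤ ‖x‖ + ‖x - y‖ := by
      calc ‖y‖ = ‖x - (x - y)‖ := by congr 1; abel
        _ ≤ ‖x‖ + ‖x - y‖ := norm_sub_le _ _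
    calc φσ (x - y) * ‖y‖ ≤ φσ (x - y) * (‖x‖ + ‖x - y‖) :=
          mul_le_mul_of_nonneg_left hy (hφpos _).le
      _ = φσ (x - y) * ‖x‖ + φσ (x - y) * ‖x - y‖ := by ring
      _ ≤ c * ‖x‖ + c * σ :=
          add_le_add (mul_le_mul_of_nonneg_right (hφle _) (norm_nonneg x)) (hφgrad_bd x y)
  -- pointwise derivative of x ↦ φσ (x - y)
  have hasF : ∀ (y x : EuclideanSpace ℝ (Fin d)),
      HasFDerivAt (fun z => φσ (z - y))
        ((φσ (x - y) * -(σ ^ 2)⁻¹) • innerSL ℝ (x - y)) x := by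
    intro y x
    have h0 : HasFDerivAt (fun z : EuclideanSpace ℝ (Fin d) => z - y)
        (ContinuousLinearMap.id ℝ _) x := (hasFDerivAt_id x).sub_const y
    have h4 := ((h0.norm_sq.const_mul (-(2 * σ ^ 2)⁻¹)).exp).const_mul c
    have heq : ∀ a : ℝ, -a / (2 * σ ^ 2) = -(2 * σ ^ 2)⁻¹ * a := by
      intro a; field_simp
    have h5 : (fun z : EuclideanSpace ℝ (Fin d) => φσ (z - y))
        = fun z => c * Real.exp (-(2 * σ ^ 2)⁻¹ * ‖z - y‖ ^ 2) := by
      funext z; rw [hφσ, heq]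
    rw [h5, hφσ, heq]
    refine h4.congr_fderiv ?_
    ext v
    simp only [ContinuousLinearMap.smul_apply, ContinuousLinearMap.coe_smul', Pi.smul_apply,
      ContinuousLinearMap.coe_comp', Function.comp_apply, ContinuousLinearMap.coe_id', id_eq,
      innerSL_apply_apply, smul_eq_mul]
    ring
  -- boundedness of the derivative integrand
  have hF'bd : ∀ x' y : EuclideanSpace ℝ (Fin d),
      ‖(φσ (x' - y) * -(σ ^ 2)⁻¹) • innerSL ℝ (x' - y)‖ ≤ (σ ^ 2)⁻¹ * (c * σ) := by
    intro x' y
    rw [norm_smul (φσ (x' - y) * -(σ ^ 2)⁻¹) (innerSL ℝ (x' - y)), Real.norm_eq_abs, abs_mul,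
      abs_of_pos (hφpos _), abs_neg,
      abs_of_pos (by positivity : (0:ℝ) < (σ ^ 2)⁻¹), innerSL_apply_norm]
    calc φσ (x' - y) * (σ ^ 2)⁻¹ * ‖x' - y‖
        = (σ ^ 2)⁻¹ * (φσ (x' - y) * ‖x' - y‖) := by ring
      _ ≤ (σ ^ 2)⁻¹ * (c * σ) :=
          mul_le_mul_of_nonneg_left (hφgrad_bd x' y) (by positivity)
  have hF'cont : ∀ x : EuclideanSpace ℝ (Fin d),
      Continuous (fun y => (φσ (x - y) * -(σ ^ 2)⁻¹) • innerSL ℝ (x - y)) :=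
    fun x => ((hφcont.comp (continuous_const.sub continuous_id)).mul continuous_const).smul
      ((innerSL ℝ).continuous.comp (continuous_const.sub continuous_id))
  -- the fderiv of pσ
  have hFD : ∀ x : EuclideanSpace ℝ (Fin d),
      HasFDerivAt pσ (∫ y, (φσ (x - y) * -(σ ^ 2)⁻¹) • innerSL ℝ (x - y) ∂ν) x := by
    intro x
    have hpeq : pσ = fun x => ∫ y, φσ (x - y) ∂ν := funext hpσ
    rw [hpeq]
    have hmeas : ∀ x' : EuclideanSpace ℝ (Fin d),
        AEStronglyMeasurable (fun y : EuclideanSpace ℝ (Fin d) => φσ (x' - y)) ν := fun x' =>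
      (hφcont.comp (continuous_const.sub continuous_id)).aestronglyMeasurable
    exact hasFDerivAt_integral_of_dominated_of_fderiv_le (Metric.ball_mem_nhds x one_pos)
      (Filter.Eventually.of_forall hmeas)
      (hI1 x) ((hF'cont x).aestronglyMeasurable)
      (ae_of_all _ fun y x' _ => hF'bd x' y) (integrable_const _)
      (ae_of_all _ fun y x' _ => hasF y x')
  have hdiff : Differentiable ℝ pσ := fun x => (hFD x).differentiableAt
  -- integrability of the CLM-valued and vector-valued gradient integrands
  have hI2 : ∀ x : EuclideanSpace ℝ (Fin d),
      Integrable (fun y => (φσ (x - y) * -(σ ^ 2)⁻¹) • innerSL ℝ (x - y)) ν := by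
    intro x
    exact Integrable.mono' (integrable_const ((σ ^ 2)⁻¹ * (c * σ)))
      (hF'cont x).aestronglyMeasurable (ae_of_all _ fun y => hF'bd x y)
  have hI4 : ∀ x : EuclideanSpace ℝ (Fin d),
      Integrable (fun y => (φσ (x - y) * -(σ ^ 2)⁻¹) • (x - y)) ν := by
    intro x
    refine Integrable.mono' (integrable_const ((σ ^ 2)⁻¹ * (c * σ)))
      (Continuous.aestronglyMeasurable
        (((hφcont.comp (continuous_const.sub continuous_id)).mul continuous_const).smul
          (continuous_const.sub continuous_id)))
      (ae_of_all _ fun y => ?_)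
    rw [norm_smul (φσ (x - y) * -(σ ^ 2)⁻¹) (x - y), Real.norm_eq_abs, abs_mul,
      abs_of_pos (hφpos _), abs_neg,
      abs_of_pos (by positivity : (0:ℝ) < (σ ^ 2)⁻¹)]
    calc φσ (x - y) * (σ ^ 2)⁻¹ * ‖x - y‖
        = (σ ^ 2)⁻¹ * (φσ (x - y) * ‖x - y‖) := by ring
      _ ≤ (σ ^ 2)⁻¹ * (c * σ) :=
          mul_le_mul_of_nonneg_left (hφgrad_bd x y) (by positivity)
  -- identify the fderiv integral with toDual of a vector integral
  have hdual : ∀ x : EuclideanSpace ℝ (Fin d),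
      (∫ y, (φσ (x - y) * -(σ ^ 2)⁻¹) • innerSL ℝ (x - y) ∂ν)
        = toDual ℝ (EuclideanSpace ℝ (Fin d))
            (∫ y, (φσ (x - y) * -(σ ^ 2)⁻¹) • (x - y) ∂ν) := by
    intro x
    ext v
    rw [ContinuousLinearMap.integral_apply (hI2 x), toDual_apply_apply, real_inner_comm,
      ← integral_inner (hI4 x) v]
    refine integral_congr_ae (ae_of_all _ fun y => ?_)
    simp only [ContinuousLinearMap.smul_apply, innerSL_apply_apply, smul_eq_mul,
      real_inner_smul_right]
    rw [real_inner_comm]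
  -- compute the vector integral
  have hGx : ∀ x : EuclideanSpace ℝ (Fin d),
      (∫ y, (φσ (x - y) * -(σ ^ 2)⁻¹) • (x - y) ∂ν)
        = (σ ^ 2)⁻¹ • ((∫ y, φσ (x - y) • y ∂ν) - pσ x • x) := by
    intro x
    have h1 : ∀ y : EuclideanSpace ℝ (Fin d), (φσ (x - y) * -(σ ^ 2)⁻¹) • (x - y)
        = (-(σ ^ 2)⁻¹ : ℝ) • (φσ (x - y) • x - φσ (x - y) • y) := by
      intro y
      rw [mul_comm, mul_smul, smul_sub]
    simp_rw [h1]
    rw [integral_smul, integral_sub ((hI1 x).smul_const x) (hI3 x), integral_smul_const,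
      ← hpσ x, neg_smul, ← smul_neg, neg_sub]
  -- gradient of pσ
  have hgradp : ∀ x : EuclideanSpace ℝ (Fin d),
      HasGradientAt pσ ((σ ^ 2)⁻¹ • ((∫ y, φσ (x - y) • y ∂ν) - pσ x • x)) x := by
    intro x
    rw [hasGradientAt_iff_hasFDerivAt, ← hGx x, ← hdual x]
    exact hFD x
  -- gradient of log ∘ pσ
  have hgradlog : ∀ x : EuclideanSpace ℝ (Fin d),
      HasGradientAt (fun z => Real.log (pσ z))
        ((pσ x)⁻¹ • ((σ ^ 2)⁻¹ • ((∫ y, φσ (x - y) • y ∂ν) - pσ x • x))) x := by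
    intro x
    rw [hasGradientAt_iff_hasFDerivAt, _root_.map_smul]
    exact (Real.hasDerivAt_log (hne x)).comp_hasFDerivAt x (hgradp x).hasFDerivAt
  refine ⟨hppos, hdiff, hI3, fun x => ?_⟩
  rw [(hgradlog x).gradient, hmσ x, smul_comm, smul_sub, inv_smul_smul₀ (hne x)]
end

section
/- Let ν be a probability measure on ℝ^d, let t ∈ (0,1), and let φ_s(x) = (2πs²)^{−d/2}·exp(−‖x‖²/(2s²)) denote the centered Gaussian density with standard deviation s on ℝ^d. Define p_t(x) = ∫ φ_{1−t}(x − t·y) dν(y), which is the density of X_t = (1−t)·X₀ + t·X₁ where X₀ is a standard Gaussian on ℝ^d independent of X₁ ∼ ν. Define the marginal velocity field v_t(x) = (∫ (y − (x − t·y)/(1−t))·φ_{1−t}(x − t·y) dν(y)) / p_t(x), all integrals converging absolutely. Then p_t is strictly positive and differentiable on ℝ^d, and for every x ∈ ℝ^d the score satisfies ∇_x log p_t(x) = (t·v_t(x) − x)/(1−t). -/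
open MeasureTheory

lemma gauss_bound (s : ℝ) (hs : 0 < s) (c : ℝ) (hc : 0 < c)
    {d : ℕ} (z : EuclideanSpace ℝ (Fin d)) :
    c * Real.exp (-‖z‖ ^ 2 / (2 * s ^ 2)) * ‖z‖ ≤ c * s := by
  set r := ‖z‖ with hr
  have hr0 : 0 ≤ r := norm_nonneg z
  have h1 : r ^ 2 / (2 * s ^ 2) + 1 ≤ Real.exp (r ^ 2 / (2 * s ^ 2)) :=
    Real.add_one_le_exp _
  have h2 : Real.exp (-r ^ 2 / (2 * s ^ 2)) * Real.exp (r ^ 2 / (2 * s ^ 2)) = 1 := by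
    rw [← Real.exp_add]; ring_nf; exact Real.exp_zero
  have h3 : r ≤ s * Real.exp (r ^ 2 / (2 * s ^ 2)) := by
    have hs2 : 0 < s ^ 2 := by positivity
    have h5 : s * (r ^ 2 / (2 * s ^ 2) + 1) ≤ s * Real.exp (r ^ 2 / (2 * s ^ 2)) :=
      mul_le_mul_of_nonneg_left h1 hs.le
    have key : r ≤ s * (r ^ 2 / (2 * s ^ 2) + 1) := by
      have heq : s * (r ^ 2 / (2 * s ^ 2) + 1) = r ^ 2 / (2 * s) + s := by
        field_simp
      rw [heq, div_add' _ _ _ (by positivity : (2:ℝ) * s ≠ 0), le_div_iff₀ (by positivity)]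
      nlinarith [sq_nonneg (r - s)]
    linarith
  have h4 := mul_le_mul_of_nonneg_left h3 (mul_pos hc (Real.exp_pos (-r ^ 2 / (2 * s ^ 2)))).le
  have h5 : c * Real.exp (-r ^ 2 / (2 * s ^ 2)) * (s * Real.exp (r ^ 2 / (2 * s ^ 2)))
      = c * s * (Real.exp (-r ^ 2 / (2 * s ^ 2)) * Real.exp (r ^ 2 / (2 * s ^ 2))) := by ring
  rw [h2, mul_one] at h5
  linarith

lemma gauss_hasFDerivAt (s c : ℝ) (hs : 0 < s) {d : ℕ}
    (w x : EuclideanSpace ℝ (Fin d)) :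
    HasFDerivAt (fun x : EuclideanSpace ℝ (Fin d) =>
        c * Real.exp (-‖x - w‖ ^ 2 / (2 * s ^ 2)))
      (((s ^ 2)⁻¹ * (c * Real.exp (-‖x - w‖ ^ 2 / (2 * s ^ 2)))) • innerSL ℝ (w - x)) x := by
  have h1 : HasFDerivAt (fun x : EuclideanSpace ℝ (Fin d) => x - w)
      (ContinuousLinearMap.id ℝ _) x := (hasFDerivAt_id x).sub_const _
  have h2 := h1.norm_sq
  have h3 : HasFDerivAt (fun x : EuclideanSpace ℝ (Fin d) => -‖x - w‖ ^ 2 / (2 * s ^ 2))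
      ((-(2 * s ^ 2)⁻¹) • (2 • (innerSL ℝ (x - w)).comp (ContinuousLinearMap.id ℝ _))) x := by
    have h2' := h2.const_mul (-(2 * s ^ 2)⁻¹)
    have hfe : (fun x : EuclideanSpace ℝ (Fin d) => -‖x - w‖ ^ 2 / (2 * s ^ 2))
        = fun x => (-(2 * s ^ 2)⁻¹) * ‖x - w‖ ^ 2 := by
      funext x; ring
    rw [hfe]
    exact h2'
  have h4 := (h3.exp).const_mul c
  refine h4.congr_fderiv ?_
  ext z
  have hinner : (inner ℝ (w - x) z : ℝ) = -(inner ℝ (x - w) z : ℝ) := by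
    rw [← neg_sub, inner_neg_left]
  simp only [ContinuousLinearMap.smul_apply, ContinuousLinearMap.coe_smul', Pi.smul_apply,
    innerSL_apply_apply, smul_eq_mul, ContinuousLinearMap.comp_apply, ContinuousLinearMap.coe_id',
    id_eq, two_smul, ContinuousLinearMap.add_apply]
  rw [hinner]
  have hs2 : (s:ℝ) ^ 2 ≠ 0 := by positivity
  field_simp
  ring

set_option maxHeartbeats 1000000 in
set_option synthInstance.maxHeartbeats 200000 in
/-- **Score–velocity identity for the independent linear flow-matching path.**
For a probability measure `ν` on `ℝ^d` and `t ∈ (0,1)`, with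
`p_t(x) = ∫ φ_{1−t}(x − t·y) dν(y)` (the density of `X_t = (1−t)X₀ + tX₁` with
`X₀ ∼ N(0, I_d)` independent of `X₁ ∼ ν`) and the marginal velocity field
`v_t(x) = (∫ (y − (x − t·y)/(1−t))·φ_{1−t}(x − t·y) dν(y))/p_t(x)`
(all integrals converging absolutely), the density `p_t` is strictly positive and
differentiable, and the score satisfies `∇ log p_t(x) = (t·v_t(x) − x)/(1−t)`. -/
theorem flow_matching_score_velocity_identity
    {d : ℕ} (ν : Measure (EuclideanSpace ℝ (Fin d))) [IsProbabilityMeasure ν]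
    (t : ℝ) (ht : t ∈ Set.Ioo (0 : ℝ) 1)
    (φ : ℝ → EuclideanSpace ℝ (Fin d) → ℝ)
    (hφ : ∀ (s : ℝ) (x : EuclideanSpace ℝ (Fin d)),
      φ s x = (2 * Real.pi * s ^ 2) ^ (-(d : ℝ) / 2)
        * Real.exp (-‖x‖ ^ 2 / (2 * s ^ 2)))
    (pt : EuclideanSpace ℝ (Fin d) → ℝ)
    (hpt : ∀ x, pt x = ∫ y, φ (1 - t) (x - t • y) ∂ν)
    (vt : EuclideanSpace ℝ (Fin d) → EuclideanSpace ℝ (Fin d))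
    (hvt : ∀ x, vt x = (pt x)⁻¹ •
      ∫ y, φ (1 - t) (x - t • y) • (y - (1 - t)⁻¹ • (x - t • y)) ∂ν) :
    (∀ x, Integrable
      (fun y => φ (1 - t) (x - t • y) • (y - (1 - t)⁻¹ • (x - t • y))) ν) ∧
    (∀ x, 0 < pt x) ∧
    Differentiable ℝ pt ∧
    (∀ x, gradient (fun z => Real.log (pt z)) x = (1 - t)⁻¹ • (t • vt x - x)) := by
  obtain ⟨ht0, ht1⟩ := ht
  have hs : (0:ℝ) < 1 - t := by linarith
  have hsne : (1:ℝ) - t ≠ 0 := ne_of_gt hs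
  set cD : ℝ := (2 * Real.pi * (1 - t) ^ 2) ^ (-(d : ℝ) / 2) with hc_def
  have hc : 0 < cD := by
    rw [hc_def]; exact Real.rpow_pos_of_pos (by positivity) _
  have hφ' : ∀ z : EuclideanSpace ℝ (Fin d),
      φ (1 - t) z = cD * Real.exp (-‖z‖ ^ 2 / (2 * (1 - t) ^ 2)) := by
    intro z; rw [hφ, ← hc_def]
  have hφpos : ∀ z : EuclideanSpace ℝ (Fin d), 0 < φ (1 - t) z := by
    intro z; rw [hφ']; positivity
  have hφle : ∀ z : EuclideanSpace ℝ (Fin d), φ (1 - t) z ≤ cD := by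
    intro z; rw [hφ']
    have h1 : Real.exp (-‖z‖ ^ 2 / (2 * (1 - t) ^ 2)) ≤ 1 := by
      rw [Real.exp_le_one_iff]
      have : (0:ℝ) ≤ ‖z‖ ^ 2 / (2 * (1 - t) ^ 2) := by positivity
      rw [neg_div]
      linarith
    nlinarith
  have hφnorm : ∀ z : EuclideanSpace ℝ (Fin d),
      φ (1 - t) z * ‖z‖ ≤ cD * (1 - t) := by
    intro z; rw [hφ']; exact gauss_bound (1 - t) hs cD hc z
  -- continuity
  have hcont : ∀ x : EuclideanSpace ℝ (Fin d),
      Continuous (fun y : EuclideanSpace ℝ (Fin d) => φ (1 - t) (x - t • y)) := by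
    intro x
    have he : (fun y : EuclideanSpace ℝ (Fin d) => φ (1 - t) (x - t • y))
        = fun y => cD * Real.exp (-‖x - t • y‖ ^ 2 / (2 * (1 - t) ^ 2)) := by
      funext y; rw [hφ']
    rw [he]; fun_prop
  -- integrability of the scalar integrand
  have hIntA : ∀ x, Integrable (fun y => φ (1 - t) (x - t • y)) ν := by
    intro x
    refine Integrable.mono' (integrable_const cD) (hcont x).aestronglyMeasurable
      (ae_of_all _ fun y => ?_)
    rw [Real.norm_eq_abs, abs_of_pos (hφpos _)]
    exact hφle _
  -- key vector identity
  have hid : ∀ x y : EuclideanSpace ℝ (Fin d),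
      y - (1 - t)⁻¹ • (x - t • y) = (1 - t)⁻¹ • (y - x) := by
    intro x y
    match_scalars <;> field_simp <;> ring
  -- bound ‖y - x‖
  have hyx : ∀ x y : EuclideanSpace ℝ (Fin d),
      t * ‖y - x‖ ≤ ‖x - t • y‖ + (1 - t) * ‖x‖ := by
    intro x y
    have h1 : t • (y - x) = (t • y - x) + (1 - t) • x := by
      match_scalars <;> ring
    have h3 := norm_add_le (t • y - x) ((1 - t) • x)
    rw [← h1, norm_smul, norm_smul, Real.norm_eq_abs, Real.norm_eq_abs,
      abs_of_pos ht0, abs_of_pos hs, norm_sub_rev (t • y) x] at h3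
    exact h3
  have hBbd : ∀ x y : EuclideanSpace ℝ (Fin d),
      φ (1 - t) (x - t • y) * ‖y - x‖ ≤ t⁻¹ * (cD * (1 - t) * (1 + ‖x‖)) := by
    intro x y
    have h2 := hyx x y
    have h4 : t * (φ (1 - t) (x - t • y) * ‖y - x‖) ≤ cD * (1 - t) * (1 + ‖x‖) := by
      have hm := mul_le_mul_of_nonneg_left h2 (hφpos (x - t • y)).le
      have hm2 := mul_le_mul_of_nonneg_right (hφle (x - t • y))
        (by positivity : (0:ℝ) ≤ (1 - t) * ‖x‖)
      nlinarith [hφnorm (x - t • y), norm_nonneg x]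
    have h5 : φ (1 - t) (x - t • y) * ‖y - x‖
        = t⁻¹ * (t * (φ (1 - t) (x - t • y) * ‖y - x‖)) := by
      field_simp
    rw [h5]
    exact mul_le_mul_of_nonneg_left h4 (by positivity)
  -- integrability of the vector integrands
  have hIntB : ∀ x, Integrable
      (fun y => φ (1 - t) (x - t • y) • (y - x)) ν := by
    intro x
    refine Integrable.mono' (integrable_const (t⁻¹ * (cD * (1 - t) * (1 + ‖x‖))))
      (Continuous.aestronglyMeasurable ?_) (ae_of_all _ fun y => ?_)
    · exact (hcont x).smul (by fun_prop)
    · rw [norm_smul, Real.norm_eq_abs, abs_of_pos (hφpos _)]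
      exact hBbd x y
  have hIntMain : ∀ x, Integrable
      (fun y => φ (1 - t) (x - t • y) • (y - (1 - t)⁻¹ • (x - t • y))) ν := by
    intro x
    have he : (fun y => φ (1 - t) (x - t • y) • (y - (1 - t)⁻¹ • (x - t • y)))
        = fun y => (1 - t)⁻¹ • (φ (1 - t) (x - t • y) • (y - x)) := by
      funext y
      rw [hid x y, smul_comm]
    rw [he]
    exact (hIntB x).smul ((1 - t)⁻¹)
  have hIntC : ∀ x, Integrable
      (fun y => φ (1 - t) (x - t • y) • (t • y - x)) ν := by
    intro x
    refine Integrable.mono' (integrable_const (cD * (1 - t)))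
      (Continuous.aestronglyMeasurable ?_) (ae_of_all _ fun y => ?_)
    · exact (hcont x).smul (by fun_prop)
    · rw [norm_smul, Real.norm_eq_abs, abs_of_pos (hφpos _), norm_sub_rev]
      exact hφnorm _
  -- positivity of pt
  have hpos : ∀ x, 0 < pt x := by
    intro x
    rw [hpt]
    rw [integral_pos_iff_support_of_nonneg (fun y => (hφpos _).le) (hIntA x)]
    have : (Function.support fun y => φ (1 - t) (x - t • y)) = Set.univ := by
      ext y; simp [Function.mem_support, (hφpos _).ne']
    rw [this]
    simp
  -- the derivative of pt under the integral sign
  have key : ∀ x : EuclideanSpace ℝ (Fin d), HasFDerivAt pt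
      (innerSL ℝ (((1 - t) ^ 2)⁻¹ •
        ∫ y, φ (1 - t) (x - t • y) • (t • y - x) ∂ν)) x := by
    intro x₀
    have hptfun : pt = fun x => ∫ y, φ (1 - t) (x - t • y) ∂ν := funext hpt
    rw [hptfun]
    have hcont' : Continuous (fun y : EuclideanSpace ℝ (Fin d) =>
        innerSL ℝ ((((1 - t) ^ 2)⁻¹ * φ (1 - t) (x₀ - t • y)) • (t • y - x₀))) := by
      refine (innerSL ℝ).continuous.comp ?_
      exact Continuous.smul (continuous_const.mul (hcont x₀)) (by fun_prop)
    have hIntD : Integrable (fun y =>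
        (((1 - t) ^ 2)⁻¹ * φ (1 - t) (x₀ - t • y)) • (t • y - x₀)) ν := by
      have he : (fun y => (((1 - t) ^ 2)⁻¹ * φ (1 - t) (x₀ - t • y)) • (t • y - x₀))
          = fun y => ((1 - t) ^ 2)⁻¹ • (φ (1 - t) (x₀ - t • y) • (t • y - x₀)) := by
        funext y; rw [← smul_smul]
      rw [he]
      exact (hIntC x₀).smul (((1 - t) ^ 2)⁻¹)
    have hder := hasFDerivAt_integral_of_dominated_of_fderiv_le
      (F := fun x y => φ (1 - t) (x - t • y))
      (F' := fun x y => innerSL ℝ ((((1 - t) ^ 2)⁻¹ * φ (1 - t) (x - t • y)) • (t • y - x)))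
      (x₀ := x₀) (bound := fun _ => cD / (1 - t)) (μ := ν) Filter.univ_mem
      (Filter.Eventually.of_forall fun x => (hcont x).aestronglyMeasurable)
      (hIntA x₀)
      hcont'.aestronglyMeasurable
      (ae_of_all _ fun y => ?_) (integrable_const _)
      (ae_of_all _ fun y => ?_)
    · -- rewrite the conclusion
      have hswap : (∫ y, innerSL ℝ ((((1 - t) ^ 2)⁻¹ * φ (1 - t) (x₀ - t • y)) • (t • y - x₀)) ∂ν)
          = innerSL ℝ (((1 - t) ^ 2)⁻¹ •
            ∫ y, φ (1 - t) (x₀ - t • y) • (t • y - x₀) ∂ν) := by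
        rw [(innerSL ℝ).integral_comp_comm hIntD]
        congr 1
        have he : (fun y => (((1 - t) ^ 2)⁻¹ * φ (1 - t) (x₀ - t • y)) • (t • y - x₀))
            = fun y => ((1 - t) ^ 2)⁻¹ • (φ (1 - t) (x₀ - t • y) • (t • y - x₀)) := by
          funext y; rw [← smul_smul]
        rw [he, integral_smul]
      rw [hswap] at hder
      exact hder
    · -- bound
      intro x _
      show ‖innerSL ℝ ((((1 - t) ^ 2)⁻¹ * φ (1 - t) (x - t • y)) • (t • y - x))‖ ≤ cD / (1 - t)
      rw [innerSL_apply_norm, norm_smul, Real.norm_eq_abs, abs_of_pos (mul_pos (by positivity) (hφpos (x - t • y))), norm_sub_rev]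
      have hb := hφnorm (x - t • y)
      rw [div_eq_mul_inv, mul_comm cD]
      calc ((1 - t) ^ 2)⁻¹ * φ (1 - t) (x - t • y) * ‖x - t • y‖
          = ((1 - t) ^ 2)⁻¹ * (φ (1 - t) (x - t • y) * ‖x - t • y‖) := by ring
        _ ≤ ((1 - t) ^ 2)⁻¹ * (cD * (1 - t)) := by
            exact mul_le_mul_of_nonneg_left hb (by positivity)
        _ = (1 - t)⁻¹ * cD := by field_simp
    · -- pointwise derivative
      intro x _
      have hg := gauss_hasFDerivAt (1 - t) cD hs (t • y) x
      have he : (fun x : EuclideanSpace ℝ (Fin d) =>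
          cD * Real.exp (-‖x - t • y‖ ^ 2 / (2 * (1 - t) ^ 2)))
          = fun x => φ (1 - t) (x - t • y) := by
        funext x; rw [hφ']
      rw [he] at hg
      have he2 : (((1 - t) ^ 2)⁻¹ * (cD * Real.exp (-‖x - t • y‖ ^ 2 / (2 * (1 - t) ^ 2))))
          • innerSL ℝ (t • y - x)
          = innerSL ℝ ((((1 - t) ^ 2)⁻¹ * φ (1 - t) (x - t • y)) • (t • y - x)) := by
        rw [hφ', ContinuousLinearMap.map_smul]
      rw [he2] at hg
      exact hg
  have hdiff : Differentiable ℝ pt := fun x => (key x).differentiableAt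
  refine ⟨hIntMain, hpos, hdiff, ?_⟩
  intro x
  -- gradient of log pt
  have h1 : HasFDerivAt (fun z => Real.log (pt z))
      ((pt x)⁻¹ • innerSL ℝ (((1 - t) ^ 2)⁻¹ •
        ∫ y, φ (1 - t) (x - t • y) • (t • y - x) ∂ν)) x :=
    (Real.hasDerivAt_log (hpos x).ne').comp_hasFDerivAt x (key x)
  have h2 : HasGradientAt (fun z => Real.log (pt z))
      ((pt x)⁻¹ • ((1 - t) ^ 2)⁻¹ •
        ∫ y, φ (1 - t) (x - t • y) • (t • y - x) ∂ν) x := by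
    rw [hasGradientAt_iff_hasFDerivAt]
    refine h1.congr_fderiv ?_
    ext z
    simp only [ContinuousLinearMap.smul_apply, InnerProductSpace.toDual_apply_apply,
      innerSL_apply_apply, smul_eq_mul, real_inner_smul_left]
  rw [h2.gradient]
  -- final algebra
  have hK : (∫ y, φ (1 - t) (x - t • y) • (t • y - x) ∂ν)
      = t • (∫ y, φ (1 - t) (x - t • y) • (y - x) ∂ν) - ((1 - t) * pt x) • x := by
    have he : ∀ y : EuclideanSpace ℝ (Fin d),
        φ (1 - t) (x - t • y) • (t • y - x)
        = t • (φ (1 - t) (x - t • y) • (y - x)) - ((1 - t) * φ (1 - t) (x - t • y)) • x := by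
      intro y; match_scalars <;> ring
    simp_rw [he]
    have hA : Integrable (fun y => t • (φ (1 - t) (x - t • y) • (y - x))) ν :=
      (hIntB x).smul t
    have hB : Integrable (fun y => ((1 - t) * φ (1 - t) (x - t • y)) • x) ν :=
      ((hIntA x).const_mul (1 - t)).smul_const x
    rw [integral_sub hA hB, integral_smul, integral_smul_const, integral_const_mul, hpt]
  have hvt' : vt x = ((pt x)⁻¹ * (1 - t)⁻¹) •
      (∫ y, φ (1 - t) (x - t • y) • (y - x) ∂ν) := by
    rw [hvt]
    have he : ∀ y : EuclideanSpace ℝ (Fin d),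
        φ (1 - t) (x - t • y) • (y - (1 - t)⁻¹ • (x - t • y))
        = (1 - t)⁻¹ • (φ (1 - t) (x - t • y) • (y - x)) := by
      intro y; rw [hid x y, smul_comm]
    simp_rw [he]
    rw [integral_smul, smul_smul]
  rw [hK, hvt']
  have hptne : pt x ≠ 0 := (hpos x).ne'
  match_scalars
  all_goals field_simp [hptne, hsne]
  all_goals try ring
  all_goals try tauto
end
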